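/- Let n ≥ 1, R > 0, λ > 0, A ≥ λ, and B ≥ A(4R²(n+1) + 1). Define v(r) = A(R² − r²)² and z(r,t) = −log(v(r) + B(T − t)) for 0 ≤ r ≤ R, 0 < t < T. Then z satisfies the supersolution inequality z_t − z_{rr} − ((n−1)/r) z_r − λ e^{z} ≥ 0 for all 0 < r < R and 0 < t < T. -/

import Mathlib

open Set Real

set_option maxHeartbeats 1000000 in
theorem stmt_5 (n : ℕ) (hn : 1 ≤ n) (R T lam A B : ℝ)
    (hR : 0 < R) (hT : 0 < T) (hlam : 0 < lam) (hA : lam ≤ A)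
    (hB : A * (4 * R ^ 2 * ((n : ℝ) + 1) + 1) ≤ B)
    (v : ℝ → ℝ) (hv : ∀ r, v r = A * (R ^ 2 - r ^ 2) ^ 2)
    (z : ℝ → ℝ → ℝ) (hz : ∀ r t, z r t = -Real.log (v r + B * (T - t))) :
    ∀ r t : ℝ, 0 < r → r < R → 0 < t → t < T →
      0 ≤ deriv (fun τ => z r τ) t - deriv (deriv (fun s => z s t)) r
          - (((n : ℝ) - 1) / r) * deriv (fun s => z s t) r
          - lam * Real.exp (z r t) := by
  intro r t hr hrR ht htT
  have hA0 : 0 < A := hlam.trans_le hA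
  have hn1 : (1 : ℝ) ≤ (n : ℝ) := by exact_mod_cast hn
  have hB0 : 0 < B :=
    lt_of_lt_of_le (mul_pos hA0 (by positivity : (0:ℝ) < 4 * R ^ 2 * ((n : ℝ) + 1) + 1)) hB
  set K : ℝ := B * (T - t) with hKdef
  have hK : 0 < K := by
    have h : 0 < T - t := by linarith
    positivity
  have hu : ∀ s : ℝ, 0 < A * (R ^ 2 - s ^ 2) ^ 2 + K := by
    intro s; nlinarith [sq_nonneg (R ^ 2 - s ^ 2)]
  set w : ℝ := A * (R ^ 2 - r ^ 2) ^ 2 + K with hwdef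
  clear_value w
  have hw : 0 < w := hwdef ▸ hu r
  -- time derivative
  have hzt : deriv (fun τ => z r τ) t = B / w := by
    have hfun : (fun τ => z r τ) = fun τ => -Real.log (A * (R ^ 2 - r ^ 2) ^ 2 + B * (T - τ)) := by
      funext τ; rw [hz, hv]
    rw [hfun]
    have hin : HasDerivAt (fun τ : ℝ => A * (R ^ 2 - r ^ 2) ^ 2 + B * (T - τ)) (-B) t := by
      have : HasDerivAt (fun τ : ℝ => T - τ) (-1) t := (hasDerivAt_id t).const_sub T
      have := (this.const_mul B).const_add (A * (R ^ 2 - r ^ 2) ^ 2)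
      exact this.congr_deriv (by ring)
    have hne : A * (R ^ 2 - r ^ 2) ^ 2 + B * (T - t) ≠ 0 := ne_of_gt (hu r)
    have : HasDerivAt (fun τ => -Real.log (A * (R ^ 2 - r ^ 2) ^ 2 + B * (T - τ)))
        (-(-B / (A * (R ^ 2 - r ^ 2) ^ 2 + B * (T - t)))) t := (hin.log hne).neg
    rw [this.deriv]
    rw [hwdef, hKdef]; field_simp
  -- spatial first derivative, as a function
  have hg : ∀ s : ℝ, HasDerivAt (fun s' => z s' t)
      ((4 * A * s * (R ^ 2 - s ^ 2)) / (A * (R ^ 2 - s ^ 2) ^ 2 + K)) s := by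
    intro s
    have hfun : (fun s' => z s' t) = fun s' => -Real.log (A * (R ^ 2 - s' ^ 2) ^ 2 + K) := by
      funext s'; rw [hz, hv, hKdef]
    rw [hfun]
    have hin : HasDerivAt (fun s' : ℝ => A * (R ^ 2 - s' ^ 2) ^ 2 + K)
        (-(4 * A * s * (R ^ 2 - s ^ 2))) s := by
      have h1 : HasDerivAt (fun s' : ℝ => R ^ 2 - s' ^ 2) (-(2 * s)) s := by
        have := (hasDerivAt_pow 2 s).const_sub (R ^ 2)
        exact this.congr_deriv (by push_cast; ring)
      have := ((h1.pow 2).const_mul A).add_const K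
      exact this.congr_deriv (by push_cast; ring)
    have := (hin.log (ne_of_gt (hu s))).neg
    exact this.congr_deriv (by ring)
  have hgderiv : deriv (fun s => z s t)
      = fun s => (4 * A * s * (R ^ 2 - s ^ 2)) / (A * (R ^ 2 - s ^ 2) ^ 2 + K) := by
    funext s; exact (hg s).deriv
  -- second derivative
  set N : ℝ := 4 * A * r * (R ^ 2 - r ^ 2) with hNdef
  clear_value N
  set D : ℝ := (4 * A * (R ^ 2 - 3 * r ^ 2) * w + N ^ 2) / w ^ 2 with hDdef
  clear_value D
  have hnum : HasDerivAt (fun s : ℝ => 4 * A * s * (R ^ 2 - s ^ 2)) (4 * A * (R ^ 2 - 3 * r ^ 2)) r := by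
    have h1 : HasDerivAt (fun s : ℝ => R ^ 2 * s - s ^ 3) (R ^ 2 - 3 * r ^ 2) r := by
      have := ((hasDerivAt_id r).const_mul (R ^ 2)).sub (hasDerivAt_pow 3 r)
      exact this.congr_deriv (by push_cast; ring)
    have heq : (fun s : ℝ => 4 * A * s * (R ^ 2 - s ^ 2)) = fun s => 4 * A * (R ^ 2 * s - s ^ 3) := by
      funext s; ring
    rw [heq]
    exact h1.const_mul (4 * A)
  have hden : HasDerivAt (fun s : ℝ => A * (R ^ 2 - s ^ 2) ^ 2 + K) (-N) r := by
    have h1 : HasDerivAt (fun s' : ℝ => R ^ 2 - s' ^ 2) (-(2 * r)) r := by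
      have := (hasDerivAt_pow 2 r).const_sub (R ^ 2)
      exact this.congr_deriv (by push_cast; ring)
    have := ((h1.pow 2).const_mul A).add_const K
    exact this.congr_deriv (by rw [hNdef]; push_cast; ring)
  have hD : HasDerivAt (fun s => (4 * A * s * (R ^ 2 - s ^ 2)) / (A * (R ^ 2 - s ^ 2) ^ 2 + K)) D r := by
    have := hnum.div hden (ne_of_gt (hu r))
    exact this.congr_deriv (by rw [hDdef, hNdef, hwdef]; field_simp; ring)
  have hz2 : deriv (deriv (fun s => z s t)) r = D := by
    rw [hgderiv]; exact hD.deriv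
  have hz1 : deriv (fun s => z s t) r = N / w := by
    rw [hNdef, hwdef]; exact (hg r).deriv
  have hexp : Real.exp (z r t) = w⁻¹ := by
    rw [hz, hv, Real.exp_neg, Real.exp_log (hu r), hwdef]
  rw [hzt, hz2, hz1, hexp]
  have hE : B / w - D - (((n : ℝ) - 1) / r) * (N / w) - lam * w⁻¹
      = ((B - lam - 4 * A * (R ^ 2 - 3 * r ^ 2)) * w * r - N ^ 2 * r - ((n : ℝ) - 1) * N * w)
        / (w ^ 2 * r) := by
    rw [hDdef]; field_simp; ring
  rw [hE]
  apply div_nonneg _ (by positivity)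
  have hrR2 : r ^ 2 < R ^ 2 := by nlinarith
  have hvw : A * (R ^ 2 - r ^ 2) ^ 2 = w - K := by rw [hwdef]; ring
  have hcoef : 0 ≤ B - lam - 4 * A * R ^ 2 - 4 * A * r ^ 2 - 4 * A * ((n : ℝ) - 1) * (R ^ 2 - r ^ 2) := by
    nlinarith [hB, hA, mul_nonneg hA0.le (sub_nonneg.mpr hrR2.le),
      mul_nonneg (mul_nonneg hA0.le (sub_nonneg.mpr hn1)) (sq_nonneg r)]
  have hT0 : 0 ≤ (B - lam - 4 * A * (R ^ 2 - 3 * r ^ 2)) * w - 16 * A * r ^ 2 * (w - K)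
      - ((n : ℝ) - 1) * (4 * A * (R ^ 2 - r ^ 2)) * w := by
    have hexpand : (B - lam - 4 * A * (R ^ 2 - 3 * r ^ 2)) * w - 16 * A * r ^ 2 * (w - K)
        - ((n : ℝ) - 1) * (4 * A * (R ^ 2 - r ^ 2)) * w
        = w * (B - lam - 4 * A * R ^ 2 - 4 * A * r ^ 2 - 4 * A * ((n : ℝ) - 1) * (R ^ 2 - r ^ 2))
          + 16 * A * r ^ 2 * K := by ring
    rw [hexpand]
    have h1 := mul_nonneg hw.le hcoef
    have h2 : 0 ≤ 16 * A * r ^ 2 * K := by positivity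
    linarith
  have final : (B - lam - 4 * A * (R ^ 2 - 3 * r ^ 2)) * w * r - (4 * A * r * (R ^ 2 - r ^ 2)) ^ 2 * r
      - ((n : ℝ) - 1) * (4 * A * r * (R ^ 2 - r ^ 2)) * w
      = r * ((B - lam - 4 * A * (R ^ 2 - 3 * r ^ 2)) * w - 16 * A * r ^ 2 * (w - K)
        - ((n : ℝ) - 1) * (4 * A * (R ^ 2 - r ^ 2)) * w) := by
    rw [← hvw]; ring
  rw [hNdef]
  linarith [final, mul_nonneg hr.le hT0]
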